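/- Lower bound in the limit (claim (5.5) in the proof of Lemma 5.1): Let p_m → p in ℝ^n with p ≠ 0 and let symmetric matrices M_m → M. Then liminf_{m→∞} Φ̃_m(p_m, M_m) ≥ −2 pᵀΣMΣp / |p|². -/
import Mathlib


open scoped RealInnerProductSpace
open Filter Topology

noncomputable section

namespace TugOfWar

/-- The quadratic form `vᵀ Σ M Σ v`, where `Σ = diag (σ 1, …, σ n)`. -/
def sigQF {n : ℕ} (σ : Fin n → ℝ) (M : Matrix (Fin n) (Fin n) ℝ)
    (v : EuclideanSpace ℝ (Fin n)) : ℝ :=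
  ∑ i, ∑ j, (σ i * v i) * M i j * (σ j * v j)

/-- `trace (Σ² M)`. -/
def trSig2 {n : ℕ} (σ : Fin n → ℝ) (M : Matrix (Fin n) (Fin n) ℝ) : ℝ :=
  ∑ i, σ i ^ 2 * M i i

/-- The integrand `Φ(θ⁺,θ⁻,d⁺,d⁻,p,M)`. -/
def Phi {n : ℕ} (σ : Fin n → ℝ) (μ : EuclideanSpace ℝ (Fin n))
    (θp θm : EuclideanSpace ℝ (Fin n)) (dp dm : ℝ)
    (p : EuclideanSpace ℝ (Fin n)) (M : Matrix (Fin n) (Fin n) ℝ) : ℝ :=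
  -(1 / 2) * sigQF σ M (θp - θm) - (1 / 2) * trSig2 σ M
    - (dp + dm) * ⟪θp + θm, p⟫ - ⟪μ, p⟫

/-- The control set `ℋ_m = S^{n-1} × [0, m]`. -/
def Hset (n : ℕ) (m : ℕ) : Set (EuclideanSpace ℝ (Fin n) × ℝ) :=
  {a | ‖a.1‖ = 1 ∧ a.2 ∈ Set.Icc (0 : ℝ) (m : ℝ)}

/-- `H_m⁺(ξ,p,M) = sup_{(θ⁻,d⁻)∈ℋ_m} inf_{(θ⁺,d⁺)∈ℋ_m} Φ + rξ`. -/
def Hplus {n : ℕ} (σ : Fin n → ℝ) (μ : EuclideanSpace ℝ (Fin n)) (r : ℝ) (m : ℕ)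
    (ξ : ℝ) (p : EuclideanSpace ℝ (Fin n)) (M : Matrix (Fin n) (Fin n) ℝ) : ℝ :=
  sSup ((fun a => sInf ((fun b => Phi σ μ b.1 a.1 b.2 a.2 p M) '' Hset n m)) '' Hset n m)
    + r * ξ

/-- `H_m⁻(ξ,p,M) = inf_{(θ⁺,d⁺)∈ℋ_m} sup_{(θ⁻,d⁻)∈ℋ_m} Φ + rξ`. -/
def Hminus {n : ℕ} (σ : Fin n → ℝ) (μ : EuclideanSpace ℝ (Fin n)) (r : ℝ) (m : ℕ)
    (ξ : ℝ) (p : EuclideanSpace ℝ (Fin n)) (M : Matrix (Fin n) (Fin n) ℝ) : ℝ :=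
  sInf ((fun b => sSup ((fun a => Phi σ μ b.1 a.1 b.2 a.2 p M) '' Hset n m)) '' Hset n m)
    + r * ξ

/-- The limit operator `F(ξ,p,M)`, for `p ≠ 0`. -/
def Fop {n : ℕ} (σ : Fin n → ℝ) (μ : EuclideanSpace ℝ (Fin n)) (r : ℝ)
    (ξ : ℝ) (p : EuclideanSpace ℝ (Fin n)) (M : Matrix (Fin n) (Fin n) ℝ) : ℝ :=
  (2 / ‖p‖ ^ 2) * sigQF σ M p + (1 / 2) * trSig2 σ M + ⟪μ, p⟫ - r * ξ

/-- `F^*(ξ,0,M) = limsup_{p → 0, p ≠ 0} F(ξ,p,M)`. -/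
def Fupper {n : ℕ} (σ : Fin n → ℝ) (μ : EuclideanSpace ℝ (Fin n)) (r : ℝ)
    (ξ : ℝ) (M : Matrix (Fin n) (Fin n) ℝ) : ℝ :=
  Filter.limsup (fun p => Fop σ μ r ξ p M) (𝓝[≠] (0 : EuclideanSpace ℝ (Fin n)))

/-- `F_*(ξ,0,M) = liminf_{p → 0, p ≠ 0} F(ξ,p,M)`. -/
def Flower {n : ℕ} (σ : Fin n → ℝ) (μ : EuclideanSpace ℝ (Fin n)) (r : ℝ)
    (ξ : ℝ) (M : Matrix (Fin n) (Fin n) ℝ) : ℝ :=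
  Filter.liminf (fun p => Fop σ μ r ξ p M) (𝓝[≠] (0 : EuclideanSpace ℝ (Fin n)))

/-- The parabolic domain `ℝ^n × [0,T]`. -/
def Dom (n : ℕ) (T : ℝ) : Set (EuclideanSpace ℝ (Fin n) × ℝ) :=
  Set.univ ×ˢ Set.Icc 0 T

/-- Test functions: `φ` is `C¹` in time with derivative `φt`, and `C²` in space with spatial
gradient `Dφ` and (symmetric) spatial Hessian `D2φ`, all jointly continuous. -/
def IsC12 {n : ℕ} (φ φt : EuclideanSpace ℝ (Fin n) → ℝ → ℝ)
    (Dφ : EuclideanSpace ℝ (Fin n) → ℝ → EuclideanSpace ℝ (Fin n))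
    (D2φ : EuclideanSpace ℝ (Fin n) → ℝ → Matrix (Fin n) (Fin n) ℝ) : Prop :=
  Continuous (fun q : EuclideanSpace ℝ (Fin n) × ℝ => φt q.1 q.2) ∧
  Continuous (fun q : EuclideanSpace ℝ (Fin n) × ℝ => Dφ q.1 q.2) ∧
  Continuous (fun q : EuclideanSpace ℝ (Fin n) × ℝ => D2φ q.1 q.2) ∧
  (∀ x t, HasDerivAt (fun s => φ x s) (φt x t) t) ∧
  (∀ x t, HasGradientAt (fun y => φ y t) (Dφ x t) x) ∧
  (∀ x t, HasFDerivAt (fun y => Dφ y t) (Matrix.toEuclideanCLM (𝕜 := ℝ) (D2φ x t)) x) ∧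
  (∀ x t, (D2φ x t).IsSymm)

/-- At most linear growth on `ℝ^n × [0,T]`. -/
def LinGrowth {n : ℕ} (T : ℝ) (u : EuclideanSpace ℝ (Fin n) → ℝ → ℝ) : Prop :=
  ∃ c : ℝ, ∀ x t, t ∈ Set.Icc 0 T → |u x t| ≤ c * (1 + ‖x‖)

/-- Continuity on `ℝ^n × [0,T]`. -/
def ContOn {n : ℕ} (T : ℝ) (u : EuclideanSpace ℝ (Fin n) → ℝ → ℝ) : Prop :=
  ContinuousOn (fun q : EuclideanSpace ℝ (Fin n) × ℝ => u q.1 q.2) (Dom n T)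

/-- The payoff `g` is positive, and `sup g + Lip(g) ≤ L`. -/
def PayoffOK {n : ℕ} (g : EuclideanSpace ℝ (Fin n) → ℝ) (L : ℝ) : Prop :=
  (∀ x, 0 < g x) ∧
  ∃ B K : ℝ, B + K ≤ L ∧ (∀ x, g x ≤ B) ∧ ∀ x y, |g x - g y| ≤ K * ‖x - y‖

/-- Viscosity supersolution of `∂ₜ u − H(u,Du,D²u) = 0` with terminal data `g`. -/
def SuperSolH {n : ℕ} (T : ℝ)
    (H : ℝ → EuclideanSpace ℝ (Fin n) → Matrix (Fin n) (Fin n) ℝ → ℝ)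
    (g : EuclideanSpace ℝ (Fin n) → ℝ) (u : EuclideanSpace ℝ (Fin n) → ℝ → ℝ) : Prop :=
  LowerSemicontinuousOn (fun q : EuclideanSpace ℝ (Fin n) × ℝ => u q.1 q.2) (Dom n T) ∧
  LinGrowth T u ∧
  (∀ x, g x ≤ u x T) ∧
  ∀ x₀ t₀, t₀ ∈ Set.Ioo 0 T →
    ∀ φ φt Dφ D2φ, IsC12 φ φt Dφ D2φ →
      u x₀ t₀ = φ x₀ t₀ →
      (∀ x t, t ∈ Set.Icc 0 T → (x, t) ≠ (x₀, t₀) → φ x t < u x t) →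
      φt x₀ t₀ ≤ H (u x₀ t₀) (Dφ x₀ t₀) (D2φ x₀ t₀)

/-- Viscosity subsolution of `∂ₜ u − H(u,Du,D²u) = 0` with terminal data `g`. -/
def SubSolH {n : ℕ} (T : ℝ)
    (H : ℝ → EuclideanSpace ℝ (Fin n) → Matrix (Fin n) (Fin n) ℝ → ℝ)
    (g : EuclideanSpace ℝ (Fin n) → ℝ) (u : EuclideanSpace ℝ (Fin n) → ℝ → ℝ) : Prop :=
  UpperSemicontinuousOn (fun q : EuclideanSpace ℝ (Fin n) × ℝ => u q.1 q.2) (Dom n T) ∧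
  LinGrowth T u ∧
  (∀ x, u x T ≤ g x) ∧
  ∀ x₀ t₀, t₀ ∈ Set.Ioo 0 T →
    ∀ φ φt Dφ D2φ, IsC12 φ φt Dφ D2φ →
      u x₀ t₀ = φ x₀ t₀ →
      (∀ x t, t ∈ Set.Icc 0 T → (x, t) ≠ (x₀, t₀) → u x t < φ x t) →
      H (u x₀ t₀) (Dφ x₀ t₀) (D2φ x₀ t₀) ≤ φt x₀ t₀

/-- Continuous viscosity solution of `∂ₜ u − H(u,Du,D²u) = 0` with terminal data `g`. -/
def SolH {n : ℕ} (T : ℝ)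
    (H : ℝ → EuclideanSpace ℝ (Fin n) → Matrix (Fin n) (Fin n) ℝ → ℝ)
    (g : EuclideanSpace ℝ (Fin n) → ℝ) (u : EuclideanSpace ℝ (Fin n) → ℝ → ℝ) : Prop :=
  ContOn T u ∧ SuperSolH T H g u ∧ SubSolH T H g u

/-- Viscosity supersolution of `∂ₜ u + F(u,Du,D²u) = 0` with terminal data `g`. -/
def SuperSolF {n : ℕ} (T : ℝ) (σ : Fin n → ℝ) (μ : EuclideanSpace ℝ (Fin n)) (r : ℝ)
    (g : EuclideanSpace ℝ (Fin n) → ℝ) (u : EuclideanSpace ℝ (Fin n) → ℝ → ℝ) : Prop :=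
  LowerSemicontinuousOn (fun q : EuclideanSpace ℝ (Fin n) × ℝ => u q.1 q.2) (Dom n T) ∧
  LinGrowth T u ∧
  (∀ x, g x ≤ u x T) ∧
  ∀ x₀ t₀, t₀ ∈ Set.Ioo 0 T →
    ∀ φ φt Dφ D2φ, IsC12 φ φt Dφ D2φ →
      u x₀ t₀ = φ x₀ t₀ →
      (∀ x t, t ∈ Set.Icc 0 T → (x, t) ≠ (x₀, t₀) → φ x t < u x t) →
      (Dφ x₀ t₀ ≠ 0 →
        φt x₀ t₀ + Fop σ μ r (u x₀ t₀) (Dφ x₀ t₀) (D2φ x₀ t₀) ≤ 0) ∧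
      (Dφ x₀ t₀ = 0 →
        φt x₀ t₀ + Flower σ μ r (u x₀ t₀) (D2φ x₀ t₀) ≤ 0)

/-- Viscosity subsolution of `∂ₜ u + F(u,Du,D²u) = 0` with terminal data `g`. -/
def SubSolF {n : ℕ} (T : ℝ) (σ : Fin n → ℝ) (μ : EuclideanSpace ℝ (Fin n)) (r : ℝ)
    (g : EuclideanSpace ℝ (Fin n) → ℝ) (u : EuclideanSpace ℝ (Fin n) → ℝ → ℝ) : Prop :=
  UpperSemicontinuousOn (fun q : EuclideanSpace ℝ (Fin n) × ℝ => u q.1 q.2) (Dom n T) ∧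
  LinGrowth T u ∧
  (∀ x, u x T ≤ g x) ∧
  ∀ x₀ t₀, t₀ ∈ Set.Ioo 0 T →
    ∀ φ φt Dφ D2φ, IsC12 φ φt Dφ D2φ →
      u x₀ t₀ = φ x₀ t₀ →
      (∀ x t, t ∈ Set.Icc 0 T → (x, t) ≠ (x₀, t₀) → u x t < φ x t) →
      (Dφ x₀ t₀ ≠ 0 →
        0 ≤ φt x₀ t₀ + Fop σ μ r (u x₀ t₀) (Dφ x₀ t₀) (D2φ x₀ t₀)) ∧
      (Dφ x₀ t₀ = 0 →
        0 ≤ φt x₀ t₀ + Fupper σ μ r (u x₀ t₀) (D2φ x₀ t₀))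

/-- Continuous viscosity solution of `∂ₜ u + F(u,Du,D²u) = 0` with terminal data `g`. -/
def SolF {n : ℕ} (T : ℝ) (σ : Fin n → ℝ) (μ : EuclideanSpace ℝ (Fin n)) (r : ℝ)
    (g : EuclideanSpace ℝ (Fin n) → ℝ) (u : EuclideanSpace ℝ (Fin n) → ℝ → ℝ) : Prop :=
  ContOn T u ∧ SuperSolF T σ μ r g u ∧ SubSolF T σ μ r g u

/-- The barrier `w̄(x,t) = g(y) + (A/ε²)(T−t) + 2L(|x−y|² + ε)^{1/2}`. -/
def barrierUp {n : ℕ} (g : EuclideanSpace ℝ (Fin n) → ℝ) (L A ε T : ℝ)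
    (y : EuclideanSpace ℝ (Fin n)) : EuclideanSpace ℝ (Fin n) → ℝ → ℝ :=
  fun x t => g y + (A / ε ^ 2) * (T - t) + 2 * L * Real.sqrt (‖x - y‖ ^ 2 + ε)

/-- The barrier `w̲(x,t) = g(y) − (A/ε²)(T−t) − 2L(|x−y|² + ε)^{1/2}`. -/
def barrierDown {n : ℕ} (g : EuclideanSpace ℝ (Fin n) → ℝ) (L A ε T : ℝ)
    (y : EuclideanSpace ℝ (Fin n)) : EuclideanSpace ℝ (Fin n) → ℝ → ℝ :=
  fun x t => g y - (A / ε ^ 2) * (T - t) - 2 * L * Real.sqrt (‖x - y‖ ^ 2 + ε)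

/-- `Φ̃(θ⁺,θ⁻,d⁺,d⁻,p,M)`: the part of `Φ` sensitive to the inf–sup. -/
def PhiT {n : ℕ} (σ : Fin n → ℝ) (θp θm : EuclideanSpace ℝ (Fin n)) (dp dm : ℝ)
    (p : EuclideanSpace ℝ (Fin n)) (M : Matrix (Fin n) (Fin n) ℝ) : ℝ :=
  -(1 / 2) * sigQF σ M (θp - θm) - (dp + dm) * ⟪θp + θm, p⟫

/-- `sup_{(θ⁻,d⁻)∈ℋ_m} Φ̃(θ⁺,θ⁻,d⁺,d⁻,p,M)` as a function of `a = (θ⁺,d⁺)`. -/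
def supPhiT {n : ℕ} (σ : Fin n → ℝ) (m : ℕ) (a : EuclideanSpace ℝ (Fin n) × ℝ)
    (p : EuclideanSpace ℝ (Fin n)) (M : Matrix (Fin n) (Fin n) ℝ) : ℝ :=
  sSup ((fun b => PhiT σ a.1 b.1 a.2 b.2 p M) '' Hset n m)

/-- `Φ̃_m(p,M) = inf_{(θ⁺,d⁺)∈ℋ_m} sup_{(θ⁻,d⁻)∈ℋ_m} Φ̃`. -/
def PhiTm {n : ℕ} (σ : Fin n → ℝ) (m : ℕ)
    (p : EuclideanSpace ℝ (Fin n)) (M : Matrix (Fin n) (Fin n) ℝ) : ℝ :=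
  sInf ((fun a => supPhiT σ m a p M) '' Hset n m)

/-- The set of values appearing in the parabolic sup-convolution. -/
def supConvSet {n : ℕ} (T ε : ℝ) (u : EuclideanSpace ℝ (Fin n) → ℝ → ℝ)
    (x₀ : EuclideanSpace ℝ (Fin n)) (t₀ : ℝ) : Set ℝ :=
  {y | ∃ x t, t ∈ Set.Icc 0 T ∧ y = u x t - ((t₀ - t) ^ 2 + ‖x₀ - x‖ ^ 2) / (2 * ε)}


/-! ### Auxiliary lemmas for `liminf_lower_bound` -/

section LiminfAux

variable {n : ℕ} (σ : Fin n → ℝ)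

/-- The bilinear form associated with `sigQF`. -/
def sigB (M : Matrix (Fin n) (Fin n) ℝ) (u v : EuclideanSpace ℝ (Fin n)) : ℝ :=
  ∑ i, ∑ j, (σ i * u i) * M i j * (σ j * v j)

/-- A bound for the bilinear form. -/
def Kc (M : Matrix (Fin n) (Fin n) ℝ) : ℝ :=
  ∑ i, ∑ j, |σ i| * |M i j| * |σ j|

lemma Kc_nonneg (M : Matrix (Fin n) (Fin n) ℝ) : 0 ≤ Kc σ M :=
  Finset.sum_nonneg fun _ _ => Finset.sum_nonneg fun _ _ => by positivity

lemma coord_abs_le_norm (v : EuclideanSpace ℝ (Fin n)) (i : Fin n) : |v i| ≤ ‖v‖ := by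
  rw [EuclideanSpace.norm_eq]
  calc |v i| = Real.sqrt (|v i| ^ 2) := (Real.sqrt_sq (abs_nonneg _)).symm
    _ ≤ _ := by
        apply Real.sqrt_le_sqrt
        have h : |v i| ^ 2 = ‖v i‖ ^ 2 := by rw [Real.norm_eq_abs]
        rw [h]
        exact Finset.single_le_sum (f := fun j => ‖v j‖ ^ 2)
          (fun j _ => sq_nonneg _) (Finset.mem_univ i)

lemma abs_sigB_le (M : Matrix (Fin n) (Fin n) ℝ) (u v : EuclideanSpace ℝ (Fin n)) :
    |sigB σ M u v| ≤ Kc σ M * (‖u‖ * ‖v‖) := by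
  unfold sigB Kc
  rw [Finset.sum_mul]
  refine (Finset.abs_sum_le_sum_abs _ _).trans (Finset.sum_le_sum fun i _ => ?_)
  rw [Finset.sum_mul]
  refine (Finset.abs_sum_le_sum_abs _ _).trans (Finset.sum_le_sum fun j _ => ?_)
  have h : |σ i * u i * M i j * (σ j * v j)| = (|σ i| * |M i j| * |σ j|) * (|u i| * |v j|) := by
    rw [abs_mul, abs_mul, abs_mul, abs_mul]; ring
  rw [h]
  have h2 : |u i| * |v j| ≤ ‖u‖ * ‖v‖ :=
    mul_le_mul (coord_abs_le_norm u i) (coord_abs_le_norm v j) (abs_nonneg _) (norm_nonneg _)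
  exact mul_le_mul_of_nonneg_left h2 (by positivity)

lemma sigQF_eq_sigB (M : Matrix (Fin n) (Fin n) ℝ) (v : EuclideanSpace ℝ (Fin n)) :
    sigQF σ M v = sigB σ M v v := rfl

lemma abs_sigQF_le (M : Matrix (Fin n) (Fin n) ℝ) (v : EuclideanSpace ℝ (Fin n)) :
    |sigQF σ M v| ≤ Kc σ M * (‖v‖ * ‖v‖) := by
  rw [sigQF_eq_sigB]; exact abs_sigB_le σ M v v

lemma sigQF_sub_eq (M : Matrix (Fin n) (Fin n) ℝ) (u v : EuclideanSpace ℝ (Fin n)) :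
    sigQF σ M u - sigQF σ M v = sigB σ M (u - v) u + sigB σ M v (u - v) := by
  unfold sigQF sigB
  rw [← Finset.sum_sub_distrib, ← Finset.sum_add_distrib]
  refine Finset.sum_congr rfl fun i _ => ?_
  rw [← Finset.sum_sub_distrib, ← Finset.sum_add_distrib]
  refine Finset.sum_congr rfl fun j _ => ?_
  have h1 : (u - v) i = u i - v i := rfl
  have h2 : (u - v) j = u j - v j := rfl
  rw [h1, h2]; ring

lemma sigQF_smul (M : Matrix (Fin n) (Fin n) ℝ) (c : ℝ) (v : EuclideanSpace ℝ (Fin n)) :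
    sigQF σ M (c • v) = c ^ 2 * sigQF σ M v := by
  unfold sigQF
  rw [Finset.mul_sum]
  refine Finset.sum_congr rfl fun i _ => ?_
  rw [Finset.mul_sum]
  refine Finset.sum_congr rfl fun j _ => ?_
  have h1 : (c • v) i = c * v i := rfl
  have h2 : (c • v) j = c * v j := rfl
  rw [h1, h2]; ring

lemma cont_sigQF :
    Continuous fun q : Matrix (Fin n) (Fin n) ℝ × EuclideanSpace ℝ (Fin n) =>
      sigQF σ q.1 q.2 := by
  unfold sigQF
  refine continuous_finset_sum _ fun i _ => continuous_finset_sum _ fun j _ => ?_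
  have hv : ∀ k : Fin n,
      Continuous fun q : Matrix (Fin n) (Fin n) ℝ × EuclideanSpace ℝ (Fin n) => q.2 k := by
    intro k
    exact (EuclideanSpace.proj (𝕜 := ℝ) k).continuous.comp continuous_snd
  have hM : Continuous fun q : Matrix (Fin n) (Fin n) ℝ × EuclideanSpace ℝ (Fin n) =>
      q.1 i j := continuous_fst.matrix_elem i j
  exact ((continuous_const.mul (hv i)).mul hM).mul (continuous_const.mul (hv j))

lemma cont_Kc : Continuous fun M : Matrix (Fin n) (Fin n) ℝ => Kc σ M := by
  unfold Kc
  refine continuous_finset_sum _ fun i _ => continuous_finset_sum _ fun j _ => ?_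
  exact (continuous_const.mul (continuous_id.matrix_elem i j).abs).mul continuous_const

lemma hset_nonempty (hn : 1 ≤ n) (m : ℕ) : (Hset n m).Nonempty := by
  refine ⟨(EuclideanSpace.single ⟨0, hn⟩ (1 : ℝ), 0), ?_, le_refl 0, Nat.cast_nonneg m⟩
  simp [EuclideanSpace.norm_single]

lemma bddAbove_phiT (m : ℕ) (pm : EuclideanSpace ℝ (Fin n)) (Mm : Matrix (Fin n) (Fin n) ℝ)
    (a : EuclideanSpace ℝ (Fin n) × ℝ) (ha : a ∈ Hset n m) :
    BddAbove ((fun b => PhiT σ a.1 b.1 a.2 b.2 pm Mm) '' Hset n m) := by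
  refine ⟨2 * Kc σ Mm + 2 * m * (2 * ‖pm‖), ?_⟩
  rintro x ⟨b, hb, rfl⟩
  obtain ⟨ha1, ha2⟩ := ha
  obtain ⟨hb1, hb2⟩ := hb
  have hle : ‖a.1 - b.1‖ ≤ 2 := by
    calc ‖a.1 - b.1‖ ≤ ‖a.1‖ + ‖b.1‖ := norm_sub_le _ _
      _ = 2 := by rw [ha1, hb1]; norm_num
  have hQ : |sigQF σ Mm (a.1 - b.1)| ≤ Kc σ Mm * (2 * 2) := by
    refine (abs_sigQF_le σ Mm _).trans ?_
    exact mul_le_mul_of_nonneg_left (by nlinarith [norm_nonneg (a.1 - b.1)]) (Kc_nonneg σ Mm)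
  have hQ1 := (abs_le.mp hQ).1
  have hab : ‖a.1 + b.1‖ ≤ 2 := by
    calc ‖a.1 + b.1‖ ≤ ‖a.1‖ + ‖b.1‖ := norm_add_le _ _
      _ = 2 := by rw [ha1, hb1]; norm_num
  have hip' : |⟪a.1 + b.1, pm⟫| ≤ 2 * ‖pm‖ := by
    refine (abs_real_inner_le_norm _ _).trans ?_
    have := norm_nonneg pm
    nlinarith
  have hip := (abs_le.mp hip').1
  show PhiT σ a.1 b.1 a.2 b.2 pm Mm ≤ 2 * Kc σ Mm + 2 * ↑m * (2 * ‖pm‖)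
  unfold PhiT
  have hs0 : (0:ℝ) ≤ a.2 + b.2 := add_nonneg ha2.1 hb2.1
  have hs2 : a.2 + b.2 ≤ 2 * m := by linarith [ha2.2, hb2.2]
  have hnp : (0:ℝ) ≤ ‖pm‖ := norm_nonneg _
  nlinarith [mul_nonneg hs0 (by linarith : (0:ℝ) ≤ ⟪a.1 + b.1, pm⟫ + 2 * ‖pm‖),
    mul_nonneg (by linarith : (0:ℝ) ≤ 2 * (m:ℝ) - (a.2 + b.2)) (by positivity : (0:ℝ) ≤ 2 * ‖pm‖)]

end LiminfAux

section LiminfAux2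

variable {n : ℕ} (σ : Fin n → ℝ)

lemma phiT_neg_self (θ : EuclideanSpace ℝ (Fin n)) (d : ℝ)
    (pm : EuclideanSpace ℝ (Fin n)) (Mm : Matrix (Fin n) (Fin n) ℝ) :
    PhiT σ θ (-θ) d 0 pm Mm = -2 * sigQF σ Mm θ := by
  unfold PhiT
  rw [sub_neg_eq_add, ← two_smul ℝ θ, sigQF_smul, add_neg_cancel, inner_zero_left]
  ring

end LiminfAux2
set_option maxHeartbeats 1600000 in
/-- claim (5.5) in the proof of Lemma 5.1: lower bound in the limit,
`liminf_m Φ̃_m(p_m, M_m) ≥ −2 pᵀΣMΣp / |p|²`. -/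
theorem liminf_lower_bound (n : ℕ) (hn : 1 ≤ n)
    (σ : Fin n → ℝ) (hσ : ∀ i, 0 < σ i)
    (ps : ℕ → EuclideanSpace ℝ (Fin n)) (Ms : ℕ → Matrix (Fin n) (Fin n) ℝ)
    (p : EuclideanSpace ℝ (Fin n)) (M : Matrix (Fin n) (Fin n) ℝ)
    (hMs : ∀ m, (Ms m).IsSymm) (hM : M.IsSymm) (hp : p ≠ 0)
    (hpt : Tendsto ps atTop (𝓝 p)) (hMt : Tendsto Ms atTop (𝓝 M)) :
    -(2 * sigQF σ M p / ‖p‖ ^ 2) ≤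
      Filter.liminf (fun m => PhiTm σ m (ps m) (Ms m)) atTop := by
  have hpn : (0:ℝ) < ‖p‖ := norm_pos_iff.mpr hp
  have hne : ‖p‖ ≠ 0 := hpn.ne'
  set ph : EuclideanSpace ℝ (Fin n) := ‖p‖⁻¹ • p with hph
  set L : ℝ := -(2 * sigQF σ M p / ‖p‖ ^ 2) with hLdef
  have hLalt : L = -(2 * sigQF σ M ph) := by
    rw [hLdef, hph, sigQF_smul]
    field_simp
  set C : ℝ := Kc σ M + 1 with hCdef
  have hC0 : 0 < C := by
    have := Kc_nonneg σ M; rw [hCdef]; linarith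
  have E1 : ∀ᶠ m in atTop, ‖p‖ / 2 ≤ ‖ps m‖ :=
    (hpt.norm).eventually (eventually_ge_nhds (by linarith))
  have E2 : ∀ᶠ m in atTop, Kc σ (Ms m) ≤ C :=
    (((cont_Kc σ).tendsto M).comp hMt).eventually
      (eventually_le_nhds (by rw [hCdef]; linarith))
  have hq : Tendsto (fun m => sigQF σ (Ms m) (‖ps m‖⁻¹ • ps m)) atTop (𝓝 (sigQF σ M ph)) := by
    have tq : Tendsto (fun m => ‖ps m‖⁻¹ • ps m) atTop (𝓝 ph) :=
      Tendsto.smul ((hpt.norm).inv₀ hpn.ne') hpt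
    have tp : Tendsto (fun m => (Ms m, ‖ps m‖⁻¹ • ps m)) atTop (𝓝 (M, ph)) :=
      hMt.prodMk_nhds tq
    have h := ((cont_sigQF σ).tendsto (M, ph)).comp tp
    exact h
  -- coboundedness: eventual upper bound `PhiTm ≤ 2C`
  have Eupper : ∀ᶠ m in atTop, PhiTm σ m (ps m) (Ms m) ≤ 2 * C := by
    filter_upwards [E1, E2] with m h1 h2
    set pm := ps m with hpmdef
    set Mm := Ms m with hMmdef
    have hpm0 : (0:ℝ) < ‖pm‖ := lt_of_lt_of_le (by linarith) h1
    set qm : EuclideanSpace ℝ (Fin n) := ‖pm‖⁻¹ • pm with hqm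
    have hqnorm : ‖qm‖ = 1 := by
      rw [hqm, norm_smul, norm_inv, norm_norm, inv_mul_cancel₀ hpm0.ne']
    have hqinner : ⟪qm, pm⟫ = ‖pm‖ := by
      rw [hqm, real_inner_smul_left, real_inner_self_eq_norm_mul_norm]
      field_simp
    unfold PhiTm
    have hamem : ((qm, 0) : EuclideanSpace ℝ (Fin n) × ℝ) ∈ Hset n m :=
      ⟨hqnorm, le_refl 0, Nat.cast_nonneg m⟩
    have hbdd : BddBelow ((fun a => supPhiT σ m a pm Mm) '' Hset n m) := by
      refine ⟨-(2 * C), ?_⟩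
      rintro x ⟨a, ha, rfl⟩
      have hbmem : ((-a.1, 0) : EuclideanSpace ℝ (Fin n) × ℝ) ∈ Hset n m :=
        ⟨by rw [norm_neg]; exact ha.1, le_refl 0, Nat.cast_nonneg m⟩
      have key : PhiT σ a.1 (-a.1) a.2 0 pm Mm ≤ supPhiT σ m a pm Mm :=
        le_csSup (bddAbove_phiT σ m pm Mm a ha) ⟨_, hbmem, rfl⟩
      rw [phiT_neg_self] at key
      have hQ := (abs_le.mp (abs_sigQF_le σ Mm a.1)).2
      rw [ha.1] at hQ
      have hK := Kc_nonneg σ Mm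
      simp only at key ⊢
      nlinarith
    have hle : sInf ((fun a => supPhiT σ m a pm Mm) '' Hset n m)
        ≤ supPhiT σ m (qm, 0) pm Mm := csInf_le hbdd ⟨_, hamem, rfl⟩
    refine hle.trans ?_
    unfold supPhiT
    refine csSup_le ((hset_nonempty hn m).image _) ?_
    rintro x ⟨b, hb, rfl⟩
    show PhiT σ qm b.1 0 b.2 pm Mm ≤ 2 * C
    unfold PhiT
    have hQ := (abs_le.mp (abs_sigQF_le σ Mm (qm - b.1))).1
    have hle2 : ‖qm - b.1‖ ≤ 2 := by
      calc ‖qm - b.1‖ ≤ ‖qm‖ + ‖b.1‖ := norm_sub_le _ _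
        _ = 2 := by rw [hqnorm, hb.1]; norm_num
    have hK := Kc_nonneg σ Mm
    have hip : 0 ≤ ⟪qm + b.1, pm⟫ := by
      rw [inner_add_left, hqinner]
      have habs := abs_real_inner_le_norm b.1 pm
      rw [hb.1, one_mul] at habs
      linarith [(abs_le.mp habs).1]
    have hd : 0 ≤ b.2 := hb.2.1
    nlinarith [mul_nonneg hd hip, norm_nonneg (qm - b.1),
      mul_le_mul hle2 hle2 (norm_nonneg (qm - b.1)) (by norm_num : (0:ℝ) ≤ 2)]
  have hcb : Filter.IsCoboundedUnder (· ≥ ·) atTop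
      (fun m => PhiTm σ m (ps m) (Ms m)) :=
    Filter.isCoboundedUnder_ge_of_eventually_le atTop Eupper
  refine le_of_forall_sub_le fun ε hε => ?_
  set e' : ℝ := ε / (16 * C) with he'def
  have he'0 : 0 < e' := by rw [he'def]; positivity
  set η : ℝ := ‖p‖ * e' ^ 2 / 4 with hηdef
  have hη0 : 0 < η := by rw [hηdef]; positivity
  have h2η : 2 * η = ‖p‖ * e' ^ 2 / 2 := by rw [hηdef]; ring
  have he4 : 4 * C * e' = ε / 4 := by
    rw [he'def]; field_simp [hC0.ne']; ring
  have E3 : ∀ᶠ m in atTop,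
      sigQF σ (Ms m) (‖ps m‖⁻¹ • ps m) ≤ sigQF σ M ph + ε / 8 :=
    hq.eventually (eventually_le_nhds (by linarith))
  have E4 : ∀ᶠ m : ℕ in atTop, (L - ε + 2 * C) / η ≤ (m : ℝ) :=
    tendsto_natCast_atTop_atTop.eventually_ge_atTop _
  clear_value L C e' η ph
  refine Filter.le_liminf_of_le hcb ?_
  filter_upwards [E1, E2, E3, E4] with m h1 h2 h3 h4
  set pm := ps m with hpmdef
  set Mm := Ms m with hMmdef
  have hpm0 : (0:ℝ) < ‖pm‖ := lt_of_lt_of_le (by linarith) h1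
  set qm : EuclideanSpace ℝ (Fin n) := ‖pm‖⁻¹ • pm with hqm
  have hqnorm : ‖qm‖ = 1 := by
    rw [hqm, norm_smul, norm_inv, norm_norm, inv_mul_cancel₀ hpm0.ne']
  have hqinner : ⟪qm, pm⟫ = ‖pm‖ := by
    rw [hqm, real_inner_smul_left, real_inner_self_eq_norm_mul_norm]
    field_simp
  clear_value pm Mm qm
  unfold PhiTm
  refine le_csInf ((hset_nonempty hn m).image _) ?_
  rintro x ⟨a, ha, rfl⟩
  obtain ⟨ha1, ha2⟩ := ha
  have hsup : ∀ b ∈ Hset n m, PhiT σ a.1 b.1 a.2 b.2 pm Mm ≤ supPhiT σ m a pm Mm :=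
    fun b hb => le_csSup (bddAbove_phiT σ m pm Mm a ⟨ha1, ha2⟩) ⟨b, hb, rfl⟩
  show L - ε ≤ supPhiT σ m a pm Mm
  by_cases hcase : ⟪a.1, pm⟫ < ‖pm‖ - η
  · -- far from p̂ : play b = (-qm, m) and use d⁻ = m large
    have hbmem : ((-qm, (m:ℝ)) : EuclideanSpace ℝ (Fin n) × ℝ) ∈ Hset n m :=
      ⟨by rw [norm_neg]; exact hqnorm, Nat.cast_nonneg m, le_refl _⟩
    refine le_trans ?_ (hsup _ hbmem)
    show L - ε ≤ PhiT σ a.1 (-qm) a.2 (m:ℝ) pm Mm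
    unfold PhiT
    rw [sub_neg_eq_add, ← sub_eq_add_neg]
    have hip : ⟪a.1 - qm, pm⟫ ≤ -η := by
      rw [inner_sub_left, hqinner]; linarith
    have hQ2 : sigQF σ Mm (a.1 + qm) ≤ C * 4 := by
      have hb := (abs_le.mp (abs_sigQF_le σ Mm (a.1 + qm))).2
      have hle2 : ‖a.1 + qm‖ ≤ 2 := by
        calc ‖a.1 + qm‖ ≤ ‖a.1‖ + ‖qm‖ := norm_add_le _ _
          _ = 2 := by rw [ha1, hqnorm]; norm_num
      have hK := Kc_nonneg σ Mm
      nlinarith [norm_nonneg (a.1 + qm),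
        mul_le_mul hle2 hle2 (norm_nonneg (a.1 + qm)) (by norm_num : (0:ℝ) ≤ 2)]
    have hmη : L - ε + 2 * C ≤ (m:ℝ) * η := by
      rw [div_le_iff₀ hη0] at h4; linarith
    have hd0 : (0:ℝ) ≤ a.2 := ha2.1
    nlinarith [mul_le_mul_of_nonneg_left hip (by positivity : (0:ℝ) ≤ a.2 + (m:ℝ)),
      mul_nonneg hd0 hη0.le, hmη, hQ2]
  · -- close to p̂ : play b = (-a.1, 0)
    push_neg at hcase
    have hbmem : ((-a.1, 0) : EuclideanSpace ℝ (Fin n) × ℝ) ∈ Hset n m :=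
      ⟨by rw [norm_neg]; exact ha1, le_refl 0, Nat.cast_nonneg m⟩
    refine le_trans ?_ (hsup _ hbmem)
    show L - ε ≤ PhiT σ a.1 (-a.1) a.2 0 pm Mm
    rw [phiT_neg_self]
    -- distance bound ‖a.1 - qm‖ ≤ e'
    have hiq : ⟪a.1, qm⟫ = ‖pm‖⁻¹ * ⟪a.1, pm⟫ := by
      rw [hqm]; exact real_inner_smul_right _ _ _
    have hnsq : ‖a.1 - qm‖ ^ 2 = 2 - 2 * (‖pm‖⁻¹ * ⟪a.1, pm⟫) := by
      rw [norm_sub_sq_real, ha1, hqnorm, hiq]; ring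
    have hmulsq : ‖pm‖ * ‖a.1 - qm‖ ^ 2 ≤ 2 * η := by
      have : ‖pm‖ * ‖a.1 - qm‖ ^ 2 = 2 * ‖pm‖ - 2 * ⟪a.1, pm⟫ := by
        rw [hnsq]; field_simp
      linarith
    have hsq : ‖a.1 - qm‖ ^ 2 ≤ e' ^ 2 := by
      have h3' : ‖pm‖ * ‖a.1 - qm‖ ^ 2 ≤ ‖pm‖ * e' ^ 2 := by
        nlinarith [mul_nonneg (by linarith : (0:ℝ) ≤ ‖pm‖ - ‖p‖ / 2) (sq_nonneg e')]
      exact le_of_mul_le_mul_left h3' hpm0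
    have hdist : ‖a.1 - qm‖ ≤ e' := by
      nlinarith [norm_nonneg (a.1 - qm), he'0]
    -- Lipschitz bound for the quadratic form
    have hQle : sigQF σ Mm a.1 ≤ sigQF σ Mm qm + 2 * C * e' := by
      have hdiff := sigQF_sub_eq σ Mm a.1 qm
      have b1 := (abs_le.mp (abs_sigB_le σ Mm (a.1 - qm) a.1)).2
      have b2 := (abs_le.mp (abs_sigB_le σ Mm qm (a.1 - qm))).2
      have hm1 : Kc σ Mm * (‖a.1 - qm‖ * ‖a.1‖) ≤ C * e' := by
        rw [ha1, mul_one]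
        exact mul_le_mul h2 hdist (norm_nonneg _) hC0.le
      have hm2 : Kc σ Mm * (‖qm‖ * ‖a.1 - qm‖) ≤ C * e' := by
        rw [hqnorm, one_mul]
        exact mul_le_mul h2 hdist (norm_nonneg _) hC0.le
      linarith
    rw [hLalt]
    linarith

end TugOfWar
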